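/- Let g be a real-valued random variable whose distribution is symmetric about 0 with a density h that is monotone nonincreasing on [0,∞) and bounded by h(x) ≤ 1/π. Then for H(a) := E[|sin(a g)|^q] with 1 ≤ q ≤ 2 and a = 1, we have H(1) ≥ |sin(π/4)|^q · (1 − 1/2) · (1 − 1/2) > 1/8. -/

import Mathlib

open MeasureTheory Real Set Filter

theorem H_one_lower_bound (h : ℝ → ℝ) (q : ℝ) (hq1 : 1 ≤ q) (hq2 : q ≤ 2)
    (hnonneg : ∀ x : ℝ, 0 ≤ h x)
    (hdensity : ∫ x, h x = 1)
    (hsymm : ∀ x : ℝ, h (-x) = h x)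
    (hmono : ∀ x y : ℝ, 0 ≤ x → x ≤ y → h y ≤ h x)
    (hbound : ∀ x : ℝ, h x ≤ 1 / Real.pi) :
    |Real.sin (Real.pi / 4)| ^ q * (1 - 1 / 2) * (1 - 1 / 2) ≤ ∫ x, |Real.sin x| ^ q * h x ∧
      (1 : ℝ) / 8 < ∫ x, |Real.sin x| ^ q * h x := by
  have pi_pos := Real.pi_pos
  -- measurability of h
  have hmeas : Measurable h := by
    have h1 : Antitone fun t : ℝ => h (max t 0) := fun a b hab =>
      hmono _ _ (le_max_right a 0) (max_le_max hab le_rfl)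
    have heq : h = fun x => h (max |x| 0) := by
      funext x
      rcases le_or_gt 0 x with hx | hx
      · rw [max_eq_left (abs_nonneg x), abs_of_nonneg hx]
      · rw [max_eq_left (abs_nonneg x), abs_of_neg hx, hsymm]
    rw [heq]
    exact h1.measurable.comp measurable_abs
  have hint : Integrable h := by
    by_contra hc
    rw [integral_undef hc] at hdensity
    norm_num at hdensity
  set f : ℝ → ℝ := fun x => Real.cos (2 * x) * h x with hfdef
  have hfmeas : Measurable f :=
    (Real.measurable_cos.comp (measurable_const_mul 2)).mul hmeas
  have hfint : Integrable f :=
    hint.bdd_mul (c := 1) (Real.continuous_cos.comp (continuous_const.mul continuous_id)).aestronglyMeasurable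
      (ae_of_all _ fun x => by simpa using Real.abs_cos_le_one (2 * x))
  -- per-period nonpositivity on [π/4 + kπ, π/4 + (k+1)π]
  have hii : ∀ a b : ℝ, IntervalIntegrable f volume a b := fun a b => hfint.intervalIntegrable
  have hfs : Integrable (fun x => f (x + π / 2)) := hfint.comp_add_right (π / 2)
  have hiis : ∀ a b : ℝ, IntervalIntegrable (fun x => f (x + π / 2)) volume a b := fun a b =>
    hfs.intervalIntegrable
  have period : ∀ k : ℕ, ∫ x in (π/4 + k*π)..(π/4 + (k+1)*π), f x ≤ 0 := by
    intro k
    set c : ℝ := π/4 + k*π with hc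
    have hsplit : ∫ x in c..(c + π), f x =
        (∫ x in c..(c + π/2), f x) + ∫ x in (c + π/2)..(c + π), f x :=
      (intervalIntegral.integral_add_adjacent_intervals (hii _ _) (hii _ _)).symm
    have hcv : ∫ x in (c + π/2)..(c + π), f x = ∫ x in c..(c + π/2), f (x + π/2) := by
      have he : c + π/2 + π/2 = c + π := by ring
      rw [intervalIntegral.integral_comp_add_right, he]
    have hsum : ∫ x in c..(c + π), f x
        = ∫ x in c..(c + π/2), (f x + f (x + π/2)) := by
      rw [hsplit, hcv, intervalIntegral.integral_add (hii _ _) (hiis _ _)]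
    have hkey : ∫ x in c..(c + π/2), (f x + f (x + π/2)) ≤ 0 := by
      rw [← neg_nonneg, ← intervalIntegral.integral_neg]
      apply intervalIntegral.integral_nonneg (by linarith)
      intro u hu
      obtain ⟨hu1, hu2⟩ := hu
      have hcos : Real.cos (2 * (u + π/2)) = -Real.cos (2 * u) := by
        have : 2 * (u + π/2) = 2 * u + π := by ring
        rw [this, Real.cos_add_pi]
      have hcosneg : Real.cos (2 * u) ≤ 0 := by
        have hper := Real.cos_add_int_mul_two_pi (2*u - (k:ℤ)*(2*π)) k
        have h2 : 2*u - (k:ℤ)*(2*π) + (k:ℤ)*(2*π) = 2*u := by ring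
        rw [h2] at hper
        rw [hper]
        apply Real.cos_nonpos_of_pi_div_two_le_of_le
        · push_cast
          rw [hc] at hu1; linarith
        · push_cast
          rw [hc] at hu2; linarith
      have hmono' : h (u + π/2) ≤ h u := by
        apply hmono u (u + π/2)
        · rw [hc] at hu1
          have : (0:ℝ) ≤ (k:ℝ) * π := mul_nonneg (Nat.cast_nonneg k) pi_pos.le
          linarith
        · linarith
      have heq2 : f u + f (u + π/2) = Real.cos (2*u) * (h u - h (u + π/2)) := by
        show Real.cos (2*u) * h u + Real.cos (2*(u + π/2)) * h (u + π/2) = _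
        rw [hcos]; ring
      rw [heq2]
      have : 0 ≤ (-Real.cos (2*u)) * (h u - h (u + π/2)) :=
        mul_nonneg (by linarith) (by linarith)
      linarith
    have hce : π/4 + ((k:ℝ)+1)*π = c + π := by rw [hc]; ring
    rw [hce, hsum]
    exact hkey
  -- prefix sums
  have prefixsum : ∀ N : ℕ, ∫ x in (π/4)..(π/4 + N*π), f x ≤ 0 := by
    intro N
    induction N with
    | zero => simp
    | succ n ih =>
      have hadd := intervalIntegral.integral_add_adjacent_intervals
        (a := π/4) (b := π/4 + n*π) (c := π/4 + (n+1)*π) (hii _ _) (hii _ _)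
      have hper := period n
      push_cast at hadd hper ⊢
      linarith
  -- tail integral ≤ 0
  have htail : ∫ x in Ioi (π/4), f x ≤ 0 := by
    have htend : Tendsto (fun N : ℕ => ∫ x in (π/4)..(π/4 + N*π), f x) atTop
        (nhds (∫ x in Ioi (π/4), f x)) := by
      apply MeasureTheory.intervalIntegral_tendsto_integral_Ioi _ hfint.integrableOn
      apply tendsto_atTop_add_const_left
      exact Tendsto.atTop_mul_const pi_pos tendsto_natCast_atTop_atTop
    exact le_of_tendsto htend (Eventually.of_forall prefixsum)
  -- near-zero part ≤ 1/4
  have hhead : ∫ x in Ioc 0 (π/4), f x ≤ 1/4 := by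
    have hle : ∫ x in Ioc 0 (π/4), f x ≤ ∫ x in Ioc (0:ℝ) (π/4), (1/π) := by
      apply setIntegral_mono_on hfint.integrableOn
        ((integrableOn_const_iff enorm_ne_top).mpr (Or.inr measure_Ioc_lt_top)) measurableSet_Ioc
      intro x _
      calc Real.cos (2*x) * h x ≤ 1 * h x :=
            mul_le_mul_of_nonneg_right (Real.cos_le_one _) (hnonneg x)
        _ = h x := one_mul _
        _ ≤ 1/π := hbound x
    rw [setIntegral_const, Real.volume_real_Ioc] at hle
    rw [max_eq_left (by linarith)] at hle
    calc ∫ x in Ioc 0 (π/4), f x ≤ (π/4 - 0) • (1/π) := hle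
      _ = 1/4 := by rw [smul_eq_mul]; field_simp; ring
  -- evenness: J = 2 * ∫_{Ioi 0} f
  have heven : ∀ x : ℝ, f |x| = f x := by
    intro x
    rcases le_or_gt 0 x with hx | hx
    · rw [abs_of_nonneg hx]
    · rw [abs_of_neg hx]
      show Real.cos (2 * -x) * h (-x) = Real.cos (2 * x) * h x
      rw [hsymm, show (2:ℝ) * -x = -(2*x) by ring, Real.cos_neg]
  have hJ : ∫ x, f x = 2 * ∫ x in Ioi (0:ℝ), f x := by
    rw [← integral_comp_abs (f := f)]
    exact integral_congr_ae (Eventually.of_forall fun x => (heven x).symm)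
  have hsplit0 : ∫ x in Ioi (0:ℝ), f x =
      (∫ x in Ioc 0 (π/4), f x) + ∫ x in Ioi (π/4), f x := by
    rw [← setIntegral_union (Ioc_disjoint_Ioi le_rfl) measurableSet_Ioi
      hfint.integrableOn hfint.integrableOn,
      Ioc_union_Ioi_eq_Ioi (by linarith : (0:ℝ) ≤ π/4)]
  have hJle : ∫ x, f x ≤ 1/2 := by
    rw [hJ, hsplit0]; linarith
  -- ∫ sin² h = 1/2 - J/2
  have hsin2int : Integrable (fun x => Real.sin x ^ 2 * h x) :=
    hint.bdd_mul (c := 1) ((Real.continuous_sin.pow 2)).aestronglyMeasurable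
      (ae_of_all _ fun x => by
        rw [Real.norm_eq_abs, abs_of_nonneg (sq_nonneg _), ← sq_abs]
        exact pow_le_one₀ (abs_nonneg _) (Real.abs_sin_le_one x))
  have hsin2 : ∫ x, Real.sin x ^ 2 * h x = 1/2 - (1/2) * ∫ x, f x := by
    have hpt : ∀ x : ℝ, Real.sin x ^ 2 * h x = (1/2) * h x - (1/2) * f x := by
      intro x
      rw [Real.sin_sq_eq_half_sub]
      simp only [hfdef]; ring
    calc ∫ x, Real.sin x ^ 2 * h x = ∫ x, ((1/2) * h x - (1/2) * f x) := by
          exact integral_congr_ae (Eventually.of_forall hpt)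
      _ = (1/2) * (∫ x, h x) - (1/2) * ∫ x, f x := by
          rw [integral_sub (hint.const_mul _) (hfint.const_mul _),
            integral_const_mul, integral_const_mul]
      _ = 1/2 - (1/2) * ∫ x, f x := by rw [hdensity]; ring
  have hsin2ge : (1:ℝ)/4 ≤ ∫ x, Real.sin x ^ 2 * h x := by
    rw [hsin2]; linarith
  -- pointwise sin² ≤ |sin|^q and integrability of target
  have hqpos : (0:ℝ) < q := by linarith
  have htargint : Integrable (fun x => |Real.sin x| ^ q * h x) := by
    apply hint.bdd_mul (c := 1)
    · exact (Real.continuous_sin.abs.rpow_const fun x => Or.inr hqpos.le).aestronglyMeasurable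
    · refine ae_of_all _ fun x => ?_
      rw [Real.norm_eq_abs, abs_of_nonneg (Real.rpow_nonneg (abs_nonneg _) q)]
      exact Real.rpow_le_one (abs_nonneg _) (Real.abs_sin_le_one x) (le_of_lt hqpos)
  have hptle : ∀ x : ℝ, Real.sin x ^ 2 * h x ≤ |Real.sin x| ^ q * h x := by
    intro x
    apply mul_le_mul_of_nonneg_right _ (hnonneg x)
    rw [← sq_abs, ← Real.rpow_natCast |Real.sin x| 2]
    rcases eq_or_lt_of_le (abs_nonneg (Real.sin x)) with h0 | hpos
    · rw [← h0, Real.zero_rpow (by norm_num : ((2:ℕ):ℝ) ≠ 0), Real.zero_rpow (ne_of_gt hqpos)]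
    · exact Real.rpow_le_rpow_of_exponent_ge hpos (Real.abs_sin_le_one x) (by push_cast; linarith)
  have hIge : (1:ℝ)/4 ≤ ∫ x, |Real.sin x| ^ q * h x := by
    calc (1:ℝ)/4 ≤ ∫ x, Real.sin x ^ 2 * h x := hsin2ge
      _ ≤ ∫ x, |Real.sin x| ^ q * h x := integral_mono hsin2int htargint hptle
  constructor
  · have hcle : |Real.sin (π/4)| ^ q ≤ 1 :=
      Real.rpow_le_one (abs_nonneg _) (Real.abs_sin_le_one _) (le_of_lt hqpos)
    nlinarith [Real.rpow_nonneg (abs_nonneg (Real.sin (π/4))) q]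
  · linarith
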